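/- Let M be a matroid on a finite ground set E and ≻ a strict linear order on E. For every X ⊆ E there exists a basis Y* of X (a maximal independent subset of X) such that for every basis Y of X the following holds: writing y*₁ ≻ y*₂ ≻ ⋯ ≻ y*ₘ and y₁ ≻ y₂ ≻ ⋯ ≻ yₘ for the enumerations of Y* and Y in decreasing order of ≻ (all bases of X have the same cardinality m), for every k ∈ {1, …, m} either y*ₖ ≻ yₖ or y*ₖ = yₖ. -/

import Mathlib

/-- A matroid on the finite ground set `α`, given by its independent sets. -/
structure FinMatroid (α : Type*) [DecidableEq α] where
  Indep : Finset α → Prop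
  indep_empty : Indep ∅
  indep_subset : ∀ ⦃A B : Finset α⦄, Indep B → A ⊆ B → Indep A
  indep_exchange : ∀ ⦃A B : Finset α⦄, Indep A → Indep B → A.card < B.card →
    ∃ x ∈ B, x ∉ A ∧ Indep (insert x A)

open Classical in
/-- The rank of a set: the common cardinality of its maximal independent
subsets. -/
noncomputable def FinMatroid.rank {α : Type*} [DecidableEq α]
    (M : FinMatroid α) (X : Finset α) : ℕ :=
  (X.powerset.filter fun A => M.Indep A).sup Finset.card

section Aux

variable {α : Type*} [DecidableEq α]

/-- Augmentation: an independent set can be extended, using elements of a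
larger independent set, to an independent set of that cardinality. -/
lemma FinMatroid.aug (M : FinMatroid α) :
    ∀ n (C D : Finset α), M.Indep C → M.Indep D → C.card ≤ D.card →
      D.card - C.card = n →
      ∃ E, C ⊆ E ∧ E ⊆ C ∪ D ∧ M.Indep E ∧ E.card = D.card := by
  intro n
  induction n with
  | zero =>
    intro C D hC _ hle hn
    exact ⟨C, le_refl _, Finset.subset_union_left, hC, le_antisymm hle (by omega)⟩
  | succ n ih =>
    intro C D hC hD hle hn
    have hlt : C.card < D.card := by omega
    obtain ⟨x, hxD, hxC, hx⟩ := M.indep_exchange hC hD hlt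
    have hcard : (insert x C).card = C.card + 1 := Finset.card_insert_of_notMem hxC
    obtain ⟨E, h1, h2, h3, h4⟩ := ih (insert x C) D hx hD (by omega) (by omega)
    refine ⟨E, (Finset.subset_insert _ _).trans h1, ?_, h3, h4⟩
    refine h2.trans ?_
    intro a ha
    rcases Finset.mem_union.1 ha with h | h
    · rcases Finset.mem_insert.1 h with rfl | h
      · exact Finset.mem_union_right _ hxD
      · exact Finset.mem_union_left _ h
    · exact Finset.mem_union_right _ h

open Classical in
/-- Count of elements `≥ t` as a `countP` on the sorted list. -/
lemma filter_card_eq_countP [LinearOrder α] (Y : Finset α) (t : α) :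
    (Y.filter (t ≤ ·)).card = (Y.sort (· ≤ ·)).countP (fun a => decide (t ≤ a)) := by
  classical
  have := Finset.sort_eq Y (· ≤ ·)
  calc (Y.filter (t ≤ ·)).card = Multiset.card (Y.val.filter (t ≤ ·)) := by
        simp [Finset.filter, Finset.card]
    _ = Multiset.countP (t ≤ ·) Y.val := (Multiset.countP_eq_card_filter _ _).symm
    _ = Multiset.countP (t ≤ ·) ↑(Y.sort (· ≤ ·)) := by rw [this]
    _ = (Y.sort (· ≤ ·)).countP (fun a => decide (t ≤ a)) := Multiset.coe_countP _ _

/-- From cardinalities of upper cuts, componentwise domination of sorted lists. -/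
lemma forall₂_of_counts [LinearOrder α] {Y Z : Finset α}
    (hcard : Y.card = Z.card)
    (h : ∀ t, (Y.filter (t ≤ ·)).card ≤ (Z.filter (t ≤ ·)).card) :
    List.Forall₂ (· ≤ ·) (Y.sort (· ≤ ·)) (Z.sort (· ≤ ·)) := by
  classical
  set l₁ := Y.sort (· ≤ ·) with hl₁
  set l₂ := Z.sort (· ≤ ·) with hl₂
  have hlen : l₁.length = l₂.length := by
    rw [hl₁, hl₂, Finset.length_sort, Finset.length_sort, hcard]
  rw [List.forall₂_iff_get]
  refine ⟨hlen, fun i h₁ h₂ => ?_⟩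
  by_contra hlt
  push_neg at hlt
  set t := l₁.get ⟨i, h₁⟩ with ht
  set n := l₁.length with hn
  have hs₁ : l₁.Pairwise (· ≤ ·) := Finset.pairwise_sort _ _
  have hs₂ : l₂.Pairwise (· ≤ ·) := Finset.pairwise_sort _ _
  -- count in l₁ is at least n - i
  have hc₁ : n - i ≤ l₁.countP (fun a => decide (t ≤ a)) := by
    have hsplit : l₁ = l₁.take i ++ l₁.drop i := (List.take_append_drop i l₁).symm
    have hdrop : (l₁.drop i).countP (fun a => decide (t ≤ a)) = (l₁.drop i).length := by
      rw [List.countP_eq_length]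
      intro a ha
      obtain ⟨j, hj, rfl⟩ := List.getElem_of_mem ha
      have hij : i + j < l₁.length := by
        have := (List.length_drop (i := i) (l := l₁)) ▸ hj; omega
      rw [List.getElem_drop]
      have : t ≤ l₁[i + j] := by
        have := hs₁.rel_get_of_le (a := ⟨i, h₁⟩) (b := ⟨i + j, by
          have := (List.length_drop (i := i) (l := l₁)) ▸ hj; omega⟩) (by simp)
        simpa [ht] using this
      simpa using this
    calc n - i = (l₁.drop i).length := by rw [List.length_drop]
      _ = (l₁.drop i).countP _ := hdrop.symm
      _ ≤ (l₁.take i).countP (fun a => decide (t ≤ a)) + (l₁.drop i).countP (fun a => decide (t ≤ a)) := Nat.le_add_left _ _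
      _ = l₁.countP (fun a => decide (t ≤ a)) := by rw [← List.countP_append, ← hsplit]
  -- count in l₂ is at most n - i - 1
  have hc₂ : l₂.countP (fun a => decide (t ≤ a)) ≤ n - (i + 1) := by
    have hsplit : l₂ = l₂.take (i + 1) ++ l₂.drop (i + 1) := (List.take_append_drop _ l₂).symm
    have htake : (l₂.take (i + 1)).countP (fun a => decide (t ≤ a)) = 0 := by
      rw [List.countP_eq_zero]
      intro a ha
      obtain ⟨j, hj, rfl⟩ := List.getElem_of_mem ha
      have hjlen : j < l₂.length := by
        have := List.length_take (i := i+1) (l := l₂) ▸ hj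
        omega
      have hji : j ≤ i := by
        have := List.length_take (i := i+1) (l := l₂) ▸ hj
        omega
      rw [List.getElem_take]
      have hle2 : l₂[j] ≤ l₂.get ⟨i, h₂⟩ := by
        have := hs₂.rel_get_of_le (a := ⟨j, hjlen⟩) (b := ⟨i, h₂⟩) (by simpa using hji)
        simpa using this
      have : l₂[j] < t := lt_of_le_of_lt hle2 hlt
      simpa using not_le.2 this
    calc l₂.countP (fun a => decide (t ≤ a))
        = (l₂.take (i+1)).countP (fun a => decide (t ≤ a)) + (l₂.drop (i+1)).countP (fun a => decide (t ≤ a)) := by rw [← List.countP_append, ← hsplit]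
      _ = (l₂.drop (i+1)).countP (fun a => decide (t ≤ a)) := by rw [htake]; omega
      _ ≤ (l₂.drop (i+1)).length := List.countP_le_length
      _ = l₂.length - (i+1) := List.length_drop
      _ = n - (i + 1) := by rw [← hlen]
  have hY := filter_card_eq_countP Y t
  have hZ := filter_card_eq_countP Z t
  have := h t
  rw [hY, hZ] at this
  rw [← hl₁] at this
  rw [← hl₂] at this
  have hin : i < n := h₁
  omega

end Aux

/-- `Y` is a basis of `X`: a maximal independent subset of `X`. -/
def FinMatroid.IsBasisOf {α : Type*} [DecidableEq α]
    (M : FinMatroid α) (Y X : Finset α) : Prop :=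
  Y ⊆ X ∧ M.Indep Y ∧ ∀ Z : Finset α, Z ⊆ X → M.Indep Z → Y ⊆ Z → Z = Y

/-- Gale's lemma: for every `X` there is a basis `Y*` of `X` that dominates
every basis `Y` of `X` priority-wise: enumerating both bases in decreasing
priority order (all bases of `X` have the same cardinality), each element of
`Y*` has weakly higher priority than the corresponding element of `Y`.
Equivalently, enumerating both in increasing order, the two lists are
componentwise related by `≤`. -/
theorem exists_dominant_basis
    {α : Type*} [Fintype α] [LinearOrder α] (M : FinMatroid α)
    (X : Finset α) :
    ∃ Ystar : Finset α, M.IsBasisOf Ystar X ∧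
      ∀ Y : Finset α, M.IsBasisOf Y X →
        List.Forall₂ (· ≤ ·) (Y.sort (· ≤ ·)) (Ystar.sort (· ≤ ·)) := by
  classical
  set f : α → ℕ := fun e => (Finset.univ.filter (· < e)).card with hf
  have hfmono : StrictMono f := by
    intro a b hab
    apply Finset.card_lt_card
    constructor
    · intro c hc
      simp only [Finset.mem_filter, Finset.mem_univ, true_and] at *
      exact lt_trans hc hab
    · intro hsub
      have h1 : a ∈ Finset.univ.filter (· < b) := by simp [hab]
      have := hsub h1
      simp at this
  set w : Finset α → ℕ := fun S => ∑ e ∈ S, 2 ^ f e with hw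
  obtain ⟨Ystar, hmem, hmax⟩ := Finset.exists_max_image
    (X.powerset.filter fun A => M.Indep A) w ⟨∅, by simp [M.indep_empty]⟩
  rw [Finset.mem_filter, Finset.mem_powerset] at hmem
  obtain ⟨hYX, hYI⟩ := hmem
  have hmax' : ∀ A, A ⊆ X → M.Indep A → w A ≤ w Ystar := by
    intro A h1 h2
    exact hmax A (by rw [Finset.mem_filter, Finset.mem_powerset]; exact ⟨h1, h2⟩)
  have hwins : ∀ (a : α) (S : Finset α), a ∉ S → w (insert a S) = 2 ^ f a + w S := by
    intro a S ha
    simp only [hw]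
    exact Finset.sum_insert ha
  have hbasis : M.IsBasisOf Ystar X := by
    refine ⟨hYX, hYI, fun Z hZX hZI hsub => ?_⟩
    by_contra hne
    obtain ⟨z, hzZ, hzY⟩ := Finset.exists_of_ssubset (hsub.ssubset_of_ne (Ne.symm hne))
    have hwle : w Z ≤ w Ystar := hmax' Z hZX hZI
    have h1 : w (insert z Ystar) ≤ w Z := by
      apply Finset.sum_le_sum_of_subset (Finset.insert_subset hzZ hsub)
    have h2 : w (insert z Ystar) = 2 ^ f z + w Ystar := hwins z Ystar hzY
    have h3 : 0 < 2 ^ f z := Nat.pow_pos (by omega)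
    omega
  refine ⟨Ystar, hbasis, ?_⟩
  have hkey : ∀ (t : α) (B : Finset α), B ⊆ X → M.Indep B → (∀ b ∈ B, t ≤ b) →
      B.card ≤ (Ystar.filter (t ≤ ·)).card := by
    intro t B hBX hBI hBt
    by_contra hc
    push_neg at hc
    set A := Ystar.filter (t ≤ ·) with hA
    have hAY : A ⊆ Ystar := Finset.filter_subset _ _
    have hAI : M.Indep A := M.indep_subset hYI hAY
    obtain ⟨x, hxB, hxA, hxI⟩ := M.indep_exchange hAI hBI hc
    have htx : t ≤ x := hBt x hxB
    have hxY : x ∉ Ystar := fun hx => hxA (Finset.mem_filter.2 ⟨hx, htx⟩)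
    have hxX : x ∈ X := hBX hxB
    set C := insert x A with hC
    have hCcard : C.card = A.card + 1 := Finset.card_insert_of_notMem hxA
    have hCsub : C ⊆ insert x Ystar := Finset.insert_subset_insert _ hAY
    by_cases hcase : C.card ≤ Ystar.card
    · obtain ⟨D, hCD, hDsub, hDI, hDcard⟩ :=
        M.aug (Ystar.card - C.card) C Ystar hxI hYI hcase rfl
      have hDsub' : D ⊆ insert x Ystar := hDsub.trans (by
        intro a ha
        rcases Finset.mem_union.1 ha with h | h
        · exact hCsub h
        · exact Finset.mem_insert_of_mem h)
      have hxD : x ∈ D := hCD (Finset.mem_insert_self _ _)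
      have hDX : D ⊆ X := hDsub'.trans (Finset.insert_subset hxX hYX)
      have hDss : D ⊂ insert x Ystar := by
        refine Finset.ssubset_iff_subset_ne.2 ⟨hDsub', ?_⟩
        intro heq
        have hins := Finset.card_insert_of_notMem hxY
        rw [heq, hins] at hDcard
        omega
      obtain ⟨y, hyI, hyD⟩ := Finset.exists_of_ssubset hDss
      have hyY : y ∈ Ystar := by
        rcases Finset.mem_insert.1 hyI with rfl | h
        · exact absurd hxD hyD
        · exact h
      have hyt : ¬ t ≤ y := fun h =>
        hyD (hCD (Finset.mem_insert_of_mem (Finset.mem_filter.2 ⟨hyY, h⟩)))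
      have hyx : y < x := lt_of_lt_of_le (not_le.1 hyt) htx
      have heq : insert y D = insert x Ystar := by
        apply Finset.eq_of_subset_of_card_le
        · exact Finset.insert_subset hyI hDsub'
        · rw [Finset.card_insert_of_notMem hxY, Finset.card_insert_of_notMem hyD, hDcard]
      have e1 : w (insert y D) = 2 ^ f y + w D := hwins y D hyD
      have e2 : w (insert x Ystar) = 2 ^ f x + w Ystar := hwins x Ystar hxY
      have hpow : 2 ^ f y < 2 ^ f x := Nat.pow_lt_pow_right one_lt_two (hfmono hyx)
      have hle := hmax' D hDX hDI
      rw [heq] at e1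
      omega
    · have hAeq : A = Ystar := Finset.eq_of_subset_of_card_le hAY (by omega)
      have hCX : C ⊆ X := Finset.insert_subset hxX (hAY.trans hYX)
      have e1 : w C = 2 ^ f x + w Ystar := by
        rw [hC, hAeq]; exact hwins x Ystar hxY
      have h2 := hmax' C hCX hxI
      have h3 : 0 < 2 ^ f x := Nat.pow_pos (by omega)
      omega
  intro Y hY
  obtain ⟨hYX', hYI', hYmax'⟩ := hY
  have hcard : Y.card = Ystar.card := by
    rcases lt_trichotomy Y.card Ystar.card with h | h | h
    · obtain ⟨x, hx1, hx2, hx3⟩ := M.indep_exchange hYI' hYI h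
      have heq := hYmax' (insert x Y) (Finset.insert_subset (hYX hx1) hYX') hx3
        (Finset.subset_insert _ _)
      exact absurd heq (by simp [Finset.insert_ne_self, hx2])
    · exact h
    · obtain ⟨x, hx1, hx2, hx3⟩ := M.indep_exchange hYI hYI' h
      have heq := hbasis.2.2 (insert x Ystar) (Finset.insert_subset (hYX' hx1) hYX) hx3
        (Finset.subset_insert _ _)
      exact absurd heq (by simp [Finset.insert_ne_self, hx2])
  apply forall₂_of_counts hcard
  intro t
  apply hkey t
  · exact (Finset.filter_subset _ _).trans hYX'
  · exact M.indep_subset hYI' (Finset.filter_subset _ _)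
  · intro b hb
    exact (Finset.mem_filter.1 hb).2
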